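/- Let (Ω, P) be a probability space, 𝒳 a measurable space, X : Ω → 𝒳 a measurable map, and G : 𝒳 → 𝒳 a measurable map. Let μ = X_*P be the law of the original data and ν = (G ∘ X)_*P the law of the perturbed data, and let ε, δ, β ≥ 0 be real numbers such that |μ(C) − ν(C)| ≤ β for every measurable set C ⊆ 𝒳. Let f, g, y : 𝒳 → Bool be measurable, with P({ω : f(X(ω)) = y(X(ω))}) ≥ 1 − ε and P({ω : g(X(ω)) = y(X(ω))}) ≥ 1 − ε. If P({ω : g(X(ω)) ≠ g(G(X(ω)))}) ≥ 1 − δ, then P({ω : f(X(ω)) ≠ f(G(X(ω)))}) ≥ 1 − δ − 4ε − β. -/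

import Mathlib

open MeasureTheory

lemma inter_bound {Ω : Type*} [MeasurableSpace Ω] (P : Measure Ω) [IsProbabilityMeasure P]
    (s t : Set Ω) (ht : MeasurableSet t) :
    (P s).toReal + (P t).toReal - 1 ≤ (P (s ∩ t)).toReal := by
  have h := measure_union_add_inter (μ := P) s ht
  have h1 : P (s ∪ t) ≤ 1 := prob_le_one
  have hs : P s ≠ ⊤ := measure_ne_top _ _
  have htt : P t ≠ ⊤ := measure_ne_top _ _
  have hu : P (s ∪ t) ≠ ⊤ := measure_ne_top _ _
  have hi : P (s ∩ t) ≠ ⊤ := measure_ne_top _ _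
  have h' : (P (s ∪ t)).toReal + (P (s ∩ t)).toReal = (P s).toReal + (P t).toReal := by
    rw [← ENNReal.toReal_add hu hi, ← ENNReal.toReal_add hs htt, h]
  have h1' : (P (s ∪ t)).toReal ≤ 1 := by
    simpa using ENNReal.toReal_mono (by norm_num) h1
  linarith

/-- Theorem 4 (transferability): if the perturbed-data distribution is within total
variation `β` of the original-data distribution, classifiers `f` and `g` each have
accuracy at least `1 - ε` against the ground truth `y` on the original data, and the
perturbation `G` fools `g` with probability at least `1 - δ`, then it fools `f` with
probability at least `1 - δ - 4ε - β`. -/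
theorem stmt0
    {Ω 𝒳 : Type*} [MeasurableSpace Ω] [MeasurableSpace 𝒳]
    (P : Measure Ω) [IsProbabilityMeasure P]
    (X : Ω → 𝒳) (hX : Measurable X)
    (G : 𝒳 → 𝒳) (hG : Measurable G)
    (ε δ β : ℝ) (hε : 0 ≤ ε) (hδ : 0 ≤ δ) (hβ : 0 ≤ β)
    (hTV : ∀ C : Set 𝒳, MeasurableSet C →
      |((P.map X) C).toReal - ((P.map (G ∘ X)) C).toReal| ≤ β)
    (f g y : 𝒳 → Bool) (hf : Measurable f) (hg : Measurable g) (hy : Measurable y)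
    (hfacc : (P {ω | f (X ω) = y (X ω)}).toReal ≥ 1 - ε)
    (hgacc : (P {ω | g (X ω) = y (X ω)}).toReal ≥ 1 - ε)
    (hfool : (P {ω | g (X ω) ≠ g (G (X ω))}).toReal ≥ 1 - δ) :
    (P {ω | f (X ω) ≠ f (G (X ω))}).toReal ≥ 1 - δ - 4 * ε - β := by
  -- measurable sets
  have hSfg : MeasurableSet {x : 𝒳 | f x = g x} :=
    measurableSet_eq_fun hf hg
  set A : Set Ω := {ω | f (X ω) = y (X ω)} with hA
  set B : Set Ω := {ω | g (X ω) = y (X ω)} with hB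
  set F : Set Ω := {ω | g (X ω) ≠ g (G (X ω))} with hF
  set D : Set Ω := (G ∘ X) ⁻¹' {x : 𝒳 | f x = g x} with hD
  have hBmeas : MeasurableSet B :=
    measurableSet_eq_fun (hg.comp hX) (hy.comp hX)
  have hFmeas : MeasurableSet F :=
    (measurableSet_eq_fun (hg.comp hX) ((hg.comp hG).comp hX)).compl
  have hDmeas : MeasurableSet D := ((hG.comp hX)) hSfg
  -- bound on P D
  have hmapX : (P.map X) {x : 𝒳 | f x = g x} = P (X ⁻¹' {x : 𝒳 | f x = g x}) :=
    Measure.map_apply hX hSfg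
  have hmapGX : (P.map (G ∘ X)) {x : 𝒳 | f x = g x} = P D :=
    Measure.map_apply (hG.comp hX) hSfg
  have hsub : A ∩ B ⊆ X ⁻¹' {x : 𝒳 | f x = g x} := by
    rintro ω ⟨h1, h2⟩
    simp only [Set.mem_preimage, Set.mem_setOf_eq]
    exact h1.trans h2.symm
  have hμ : (P (X ⁻¹' {x : 𝒳 | f x = g x})).toReal ≥ 1 - 2 * ε := by
    have h1 : (P (A ∩ B)).toReal ≥ 1 - 2 * ε := by
      have := inter_bound P A B hBmeas
      linarith
    have h2 : P (A ∩ B) ≤ P (X ⁻¹' {x : 𝒳 | f x = g x}) := measure_mono hsub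
    have := ENNReal.toReal_mono (measure_ne_top _ _) h2
    linarith
  have hPD : (P D).toReal ≥ 1 - 2 * ε - β := by
    have := hTV {x : 𝒳 | f x = g x} hSfg
    rw [hmapX, hmapGX] at this
    have := abs_le.mp this
    linarith [this.2]
  -- intersection bound
  have h1 : (P (A ∩ B)).toReal ≥ (P A).toReal + (P B).toReal - 1 :=
    inter_bound P A B hBmeas
  have h2 : (P (A ∩ B ∩ F)).toReal ≥ (P (A ∩ B)).toReal + (P F).toReal - 1 :=
    inter_bound P (A ∩ B) F hFmeas
  have h3 : (P (A ∩ B ∩ F ∩ D)).toReal ≥ (P (A ∩ B ∩ F)).toReal + (P D).toReal - 1 :=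
    inter_bound P (A ∩ B ∩ F) D hDmeas
  -- inclusion in target
  have hincl : A ∩ B ∩ F ∩ D ⊆ {ω | f (X ω) ≠ f (G (X ω))} := by
    rintro ω ⟨⟨⟨ha, hb⟩, hfe⟩, hd⟩
    simp only [Set.mem_setOf_eq] at ha hb hfe ⊢
    simp only [hD, Set.mem_preimage, Set.mem_setOf_eq, Function.comp] at hd
    exact fun h => hfe ((hb.trans ha.symm).trans (h.trans hd))
  have hmono := ENNReal.toReal_mono (measure_ne_top P _) (measure_mono hincl)
  linarith
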